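/- A coalition switch satisfying the switch condition does not increase the global objective max_j χ(R_j) over all coalitions, and if the switched pair attains the global maximum before the switch, the multiset of coalition costs strictly decreases in the max-lexicographic order. -/

import Mathlib

open scoped Classical

lemma lex_of_count_lt (M : ℝ) :
    ∀ (l₂ l₁ : List ℝ), l₁.Pairwise (· ≥ ·) → l₂.Pairwise (· ≥ ·) →
    (∀ x ∈ l₁, x ≤ M) → (∀ x ∈ l₂, x ≤ M) →
    l₁.count M < l₂.count M → List.Lex (· < ·) l₁ l₂
  | [], _, _, _, _, _, h => by simp at h
  | b :: t₂, l₁, h₁, h₂, hb₁, hb₂, hc => by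
    have hMmem : M ∈ b :: t₂ := by
      apply List.count_pos_iff.mp
      omega
    have hbM : b = M := by
      rcases List.mem_cons.mp hMmem with h | h
      · exact h.symm
      · exact le_antisymm (hb₂ b List.mem_cons_self) (List.rel_of_pairwise_cons h₂ h)
    subst hbM
    match l₁, h₁, hb₁, hc with
    | [], _, _, _ => exact List.Lex.nil
    | a :: t₁, h₁, hb₁, hc =>
      rcases lt_or_eq_of_le (hb₁ a List.mem_cons_self) with h | h
      · exact List.Lex.rel h
      · subst h
        refine List.Lex.cons ?_
        have hc' : t₁.count a < t₂.count a := by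
          simp [List.count_cons_self] at hc; omega
        exact lex_of_count_lt a t₂ t₁ h₁.of_cons h₂.of_cons
          (fun x hx => hb₁ x (List.mem_cons_of_mem _ hx))
          (fun x hx => hb₂ x (List.mem_cons_of_mem _ hx)) hc'

/-- The descending-sorted list of coalition costs of a scheme. -/
noncomputable def costListDesc {N J : Type*} [Fintype J] (χ : Finset N → ℝ)
    (S : J → Finset N) : List ℝ :=
  (Finset.univ.val.map (fun j => χ (S j))).sort (· ≥ ·)

lemma count_costListDesc {N J : Type*} [Fintype J] (χ : Finset N → ℝ)
    (S : J → Finset N) (M : ℝ) :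
    (costListDesc χ S).count M = (Finset.univ.filter (fun l => M = χ (S l))).card := by
  unfold costListDesc
  rw [← Multiset.coe_count, Multiset.sort_eq, Multiset.count_map]
  rfl

lemma mem_costListDesc {N J : Type*} [Fintype J] (χ : Finset N → ℝ)
    (S : J → Finset N) (x : ℝ) (hx : x ∈ costListDesc χ S) : ∃ l, x = χ (S l) := by
  unfold costListDesc at hx
  rw [Multiset.mem_sort, Multiset.mem_map] at hx
  obtain ⟨l, _, hl⟩ := hx
  exact ⟨l, hl.symm⟩

theorem switch_global_max_and_lex
    {N J : Type*} [Fintype N] [DecidableEq N] [Fintype J] [DecidableEq J]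
    [Nonempty J]
    (χ : Finset N → ℝ) (hχ : ∀ R, 0 ≤ χ R)
    (S S' : J → Finset N) (i : N) (j j' : J)
    (hne : j ≠ j') (hi : i ∈ S j)
    (hSj : S' j = (S j).erase i) (hSj' : S' j' = insert i (S j'))
    (hother : ∀ l, l ≠ j → l ≠ j' → S' l = S l)
    (hcond : max (χ (insert i (S j'))) (χ ((S j).erase i))
              < max (χ (S j)) (χ (S j'))) :
    Finset.univ.sup' Finset.univ_nonempty (fun l => χ (S' l))
      ≤ Finset.univ.sup' Finset.univ_nonempty (fun l => χ (S l)) ∧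
    (max (χ (S j)) (χ (S j'))
        = Finset.univ.sup' Finset.univ_nonempty (fun l => χ (S l)) →
      List.Lex (· < ·) (costListDesc χ S') (costListDesc χ S)) := by
  set M := Finset.univ.sup' Finset.univ_nonempty (fun l => χ (S l)) with hMdef
  have hle : ∀ l, χ (S l) ≤ M := fun l => Finset.le_sup' (fun l => χ (S l)) (Finset.mem_univ l)
  have hmaxle : max (χ (S j)) (χ (S j')) ≤ M := max_le (hle j) (hle j')
  have hbound : ∀ l, χ (S' l) ≤ M := by
    intro l
    by_cases hlj : l = j
    · subst hlj; rw [hSj]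
      exact le_trans (le_of_lt (lt_of_le_of_lt (le_max_right _ _) hcond)) hmaxle
    by_cases hlj' : l = j'
    · subst hlj'; rw [hSj']
      exact le_trans (le_of_lt (lt_of_le_of_lt (le_max_left _ _) hcond)) hmaxle
    · rw [hother l hlj hlj']; exact hle l
  constructor
  · exact Finset.sup'_le _ _ (fun l _ => hbound l)
  · intro hM
    -- the switched coalitions have cost < M after the switch
    have hj'lt : χ (S' j') < M := by
      rw [hSj', ← hM]; exact lt_of_le_of_lt (le_max_left _ _) hcond
    have hjlt : χ (S' j) < M := by
      rw [hSj, ← hM]; exact lt_of_le_of_lt (le_max_right _ _) hcond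
    have hsub : (Finset.univ.filter (fun l => M = χ (S' l))) ⊂
        (Finset.univ.filter (fun l => M = χ (S l))) := by
      constructor
      · intro l hl
        rw [Finset.mem_filter] at hl ⊢
        refine ⟨Finset.mem_univ l, ?_⟩
        by_cases hlj : l = j
        · exact absurd hl.2.symm (ne_of_lt (hlj ▸ hjlt))
        by_cases hlj' : l = j'
        · exact absurd hl.2.symm (ne_of_lt (hlj' ▸ hj'lt))
        · rw [← hother l hlj hlj']; exact hl.2
      · intro hcon
        have hwit : ∃ l0, M = χ (S l0) ∧ χ (S' l0) < M := by
          rcases max_cases (χ (S j)) (χ (S j')) with ⟨he, _⟩ | ⟨he, _⟩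
          · exact ⟨j, by rw [← hM, he], hjlt⟩
          · exact ⟨j', by rw [← hM, he], hj'lt⟩
        obtain ⟨l0, hl0, hl0'⟩ := hwit
        have := hcon (Finset.mem_filter.mpr ⟨Finset.mem_univ l0, hl0⟩)
        rw [Finset.mem_filter] at this
        exact absurd this.2.symm (ne_of_lt hl0')
    have hcount : (costListDesc χ S').count M < (costListDesc χ S).count M := by
      rw [count_costListDesc, count_costListDesc]
      exact Finset.card_lt_card hsub
    refine lex_of_count_lt M _ _ (Multiset.pairwise_sort _ _) (Multiset.pairwise_sort _ _)
      ?_ ?_ hcount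
    · intro x hx; obtain ⟨l, rfl⟩ := mem_costListDesc χ S' x hx; exact hbound l
    · intro x hx; obtain ⟨l, rfl⟩ := mem_costListDesc χ S x hx; exact hle l
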